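/- arXiv:1710.03530 — 4 statements merged into one kernel-verified Lean document; each statement's English description precedes it below -/
import Mathlib

section
/- For matrices A of size m×n and B of size p×q, with t = lcm(n,p), the semi-tensor product A⋉B := (A⊗I_{t/n})(B⊗I_{t/p}) is associative: (A⋉B)⋉C = A⋉(B⋉C) for all matrices A, B, C. -/
open Matrix Kronecker

noncomputable section

/-- `A ⊗ I_s`, reindexed to `Fin (m*s) × Fin (n*s)` index types. -/
def mkron {m n : ℕ} (A : Matrix (Fin m) (Fin n) ℝ) (s : ℕ) :
    Matrix (Fin (m * s)) (Fin (n * s)) ℝ :=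
  Matrix.reindex finProdFinEquiv finProdFinEquiv
    (Matrix.kroneckerMap (· * ·) A (1 : Matrix (Fin s) (Fin s) ℝ))

/-- `x ⊗ 1_s`: each entry of `x` repeated `s` times (Kronecker with the all-ones vector). -/
def vkron {r : ℕ} (x : Fin r → ℝ) (s : ℕ) : Fin (r * s) → ℝ :=
  fun i => x (finProdFinEquiv.symm i).1

/-- The semi-tensor (M-) product `A ⋉ B = (A ⊗ I_{t/n})(B ⊗ I_{t/p})`, `t = lcm n p`. -/
def stp {m n p q : ℕ} (A : Matrix (Fin m) (Fin n) ℝ) (B : Matrix (Fin p) (Fin q) ℝ) :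
    Matrix (Fin (m * (Nat.lcm n p / n))) (Fin (q * (Nat.lcm n p / p))) ℝ :=
  mkron A (Nat.lcm n p / n) *
    (mkron B (Nat.lcm n p / p)).submatrix
      (Fin.cast (by
        rw [Nat.mul_div_cancel' (Nat.dvd_lcm_left n p),
          Nat.mul_div_cancel' (Nat.dvd_lcm_right n p)])) id

/-- The vector (V-) product `A ⋉_V x = (A ⊗ I_{t/n})(x ⊗ 1_{t/r})`, `t = lcm n r`. -/
def vprod {m n r : ℕ} (A : Matrix (Fin m) (Fin n) ℝ) (x : Fin r → ℝ) :
    Fin (m * (Nat.lcm n r / n)) → ℝ :=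
  (mkron A (Nat.lcm n r / n)).mulVec fun j =>
    vkron x (Nat.lcm n r / r)
      (Fin.cast (by
        rw [Nat.mul_div_cancel' (Nat.dvd_lcm_left n r),
          Nat.mul_div_cancel' (Nat.dvd_lcm_right n r)]) j)

/-- V-addition `x ⊞ y = (x ⊗ 1_{t/m}) + (y ⊗ 1_{t/n})`, `t = lcm m n`. -/
def vadd2 {m n : ℕ} (x : Fin m → ℝ) (y : Fin n → ℝ) : Fin (Nat.lcm m n) → ℝ :=
  fun i =>
    vkron x (Nat.lcm m n / m) (Fin.cast (Nat.mul_div_cancel' (Nat.dvd_lcm_left m n)).symm i) +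
    vkron y (Nat.lcm m n / n) (Fin.cast (Nat.mul_div_cancel' (Nat.dvd_lcm_right m n)).symm i)

/-- V-subtraction `x ⊟ y = (x ⊗ 1_{t/m}) - (y ⊗ 1_{t/n})`, `t = lcm m n`. -/
def vsub2 {m n : ℕ} (x : Fin m → ℝ) (y : Fin n → ℝ) : Fin (Nat.lcm m n) → ℝ :=
  fun i =>
    vkron x (Nat.lcm m n / m) (Fin.cast (Nat.mul_div_cancel' (Nat.dvd_lcm_left m n)).symm i) -
    vkron y (Nat.lcm m n / n) (Fin.cast (Nat.mul_div_cancel' (Nat.dvd_lcm_right m n)).symm i)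

/-- The dimension-normalized norm `‖x‖_V = sqrt((1/k) ∑ xᵢ²)`. -/
def vnorm {k : ℕ} (x : Fin k → ℝ) : ℝ :=
  Real.sqrt ((∑ i, x i ^ 2) / k)

/-- The dimension-free inner product `⟨x,y⟩_V = (1/t)⟨x⊗1_{t/m}, y⊗1_{t/n}⟩`. -/
def vinner {m n : ℕ} (x : Fin m → ℝ) (y : Fin n → ℝ) : ℝ :=
  (∑ i : Fin (Nat.lcm m n),
      vkron x (Nat.lcm m n / m) (Fin.cast (Nat.mul_div_cancel' (Nat.dvd_lcm_left m n)).symm i) *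
      vkron y (Nat.lcm m n / n)
        (Fin.cast (Nat.mul_div_cancel' (Nat.dvd_lcm_right m n)).symm i)) /
    (Nat.lcm m n)

/-- The dimension-free distance `d(x,y) = ‖x ⊟ y‖_V`. -/
def vdist {m n : ℕ} (x : Fin m → ℝ) (y : Fin n → ℝ) : ℝ := vnorm (vsub2 x y)

/-- The spectral norm `‖A‖ = sqrt(σ_max(AᵀA))` (largest eigenvalue of `AᵀA = AᴴA` over `ℝ`). -/
def specNorm {m n : ℕ} (A : Matrix (Fin m) (Fin n) ℝ) : ℝ :=
  Real.sqrt (⨆ i, (Matrix.isHermitian_conjTranspose_mul_self A).eigenvalues i)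

/-- Vector equivalence: `x ↔ y` iff `x ⊗ 1_α = y ⊗ 1_β` for some `α, β ≥ 1`. -/
def VEquiv {m n : ℕ} (x : Fin m → ℝ) (y : Fin n → ℝ) : Prop :=
  ∃ (α β : ℕ), 0 < α ∧ 0 < β ∧
    ∃ h : m * α = n * β, ∀ i, vkron x α i = vkron y β (Fin.cast h i)

/-- Matrix equivalence: `A ∼ B` iff `A ⊗ I_α = B ⊗ I_β` for some `α, β ≥ 1`. -/
def MEquiv {m n p q : ℕ} (A : Matrix (Fin m) (Fin n) ℝ) (B : Matrix (Fin p) (Fin q) ℝ) : Prop :=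
  ∃ (α β : ℕ), 0 < α ∧ 0 < β ∧
    ∃ (h1 : m * α = p * β) (h2 : n * α = q * β),
      ∀ i j, mkron A α i j = mkron B β (Fin.cast h1 i) (Fin.cast h2 j)

/-- `R^r` is `A`-invariant: `A ⋉_V x ∈ R^r` for every `x ∈ R^r`. -/
def AInvariant {m n : ℕ} (A : Matrix (Fin m) (Fin n) ℝ) (r : ℕ) : Prop :=
  ∀ x : Fin r → ℝ, ∃ y : Fin r → ℝ,
    (⟨_, vprod A x⟩ : Σ k : ℕ, Fin k → ℝ) = ⟨r, y⟩

def mcast {a b a' b' : ℕ} (h1 : a = a') (h2 : b = b') (M : Matrix (Fin a) (Fin b) ℝ) :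
    Matrix (Fin a') (Fin b') ℝ :=
  M.submatrix (Fin.cast h1.symm) (Fin.cast h2.symm)

theorem mcast_mcast {a b a' b' a'' b''} (h1 : a = a') (h2 : b = b') (h3 : a' = a'') (h4 : b' = b'')
    (M : Matrix (Fin a) (Fin b) ℝ) :
    mcast h3 h4 (mcast h1 h2 M) = mcast (h1.trans h3) (h2.trans h4) M := rfl

theorem stp_eq {m n p q : ℕ} (A : Matrix (Fin m) (Fin n) ℝ) (B : Matrix (Fin p) (Fin q) ℝ)
    (h : p * (Nat.lcm n p / p) = n * (Nat.lcm n p / n)) :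
    stp A B = mkron A (Nat.lcm n p / n) * mcast h rfl (mkron B (Nat.lcm n p / p)) := rfl

theorem mcast_mul_mcast {a b b2 c a' b' c' : ℕ} (h1 : a = a') (h2 : b = b') (h2' : b2 = b')
    (h3 : c = c') (M : Matrix (Fin a) (Fin b) ℝ) (N : Matrix (Fin b2) (Fin c) ℝ) :
    mcast h1 h2 M * mcast h2' h3 N = mcast h1 h3 (M * mcast (h2'.trans h2.symm) rfl N) := by
  have hb : b2 = b := h2'.trans h2.symm
  subst hb; subst h1; subst h2; subst h3; rfl

theorem mul_mcast {a b b2 c c' : ℕ} (h1 : b2 = b) (h2 : c = c')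
    (M : Matrix (Fin a) (Fin b) ℝ) (N : Matrix (Fin b2) (Fin c) ℝ) :
    M * mcast h1 h2 N = mcast rfl h2 (M * mcast h1 rfl N) := by
  subst h1; subst h2; rfl

theorem mkron_mul {a b c : ℕ} (M : Matrix (Fin a) (Fin b) ℝ) (N : Matrix (Fin b) (Fin c) ℝ)
    (s : ℕ) : mkron (M * N) s = mkron M s * mkron N s := by
  unfold mkron
  rw [Matrix.reindex_apply, Matrix.reindex_apply, Matrix.reindex_apply,
    Matrix.submatrix_mul_equiv, ← Matrix.mul_kronecker_mul, Matrix.one_mul]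

theorem mkron_mcast {a b a' b' : ℕ} (h1 : a = a') (h2 : b = b')
    (M : Matrix (Fin a) (Fin b) ℝ) (s : ℕ) :
    mkron (mcast h1 h2 M) s = mcast (by rw [h1]) (by rw [h2]) (mkron M s) := by
  subst h1; subst h2; rfl

theorem mkron_apply {m n : ℕ} (A : Matrix (Fin m) (Fin n) ℝ) (s : ℕ)
    (i : Fin (m * s)) (j : Fin (n * s)) :
    mkron A s i j = A i.divNat j.divNat * (if (i : ℕ) % s = (j : ℕ) % s then 1 else 0) := by
  simp [mkron, Matrix.kroneckerMap, Matrix.one_apply, Fin.ext_iff, Fin.modNat]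

theorem mod_mul_key (a b z : ℕ) : z % (a * b) = b * (z / b % a) + z % b := by
  have h1 : z % (a * b) / b = z / b % a := by
    rw [mul_comm a b]; exact Nat.mod_mul_right_div_self z b a
  have h2 : z % (a * b) % b = z % b := Nat.mod_mod_of_dvd z (dvd_mul_left b a)
  calc z % (a * b) = b * (z % (a * b) / b) + z % (a * b) % b := (Nat.div_add_mod _ b).symm
    _ = b * (z / b % a) + z % b := by rw [h1, h2]

theorem mod_mul_iff {x y a b : ℕ} :
    x % (a * b) = y % (a * b) ↔ (x / b % a = y / b % a ∧ x % b = y % b) := by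
  constructor
  · intro h
    constructor
    · have h' : x % (b * a) / b = y % (b * a) / b := by rw [mul_comm b a, h]
      rwa [Nat.mod_mul_right_div_self, Nat.mod_mul_right_div_self] at h'
    · have h' : x % (a * b) % b = y % (a * b) % b := by rw [h]
      rwa [Nat.mod_mod_of_dvd x (dvd_mul_left b a),
        Nat.mod_mod_of_dvd y (dvd_mul_left b a)] at h'
  · rintro ⟨h1, h2⟩
    rw [mod_mul_key a b x, mod_mul_key a b y, h1, h2]

theorem mkron_mkron {m n : ℕ} (A : Matrix (Fin m) (Fin n) ℝ) (a b : ℕ) :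
    mkron (mkron A a) b =
      mcast (mul_assoc m a b).symm (mul_assoc n a b).symm (mkron A (a * b)) := by
  ext i j
  rw [mkron_apply, mkron_apply]
  show _ = mkron A (a*b) (Fin.cast (mul_assoc m a b) i) (Fin.cast (mul_assoc n a b) j)
  rw [mkron_apply]
  have ei : ((Fin.cast (mul_assoc m a b) i).divNat : Fin m) = i.divNat.divNat := by
    apply Fin.ext
    simp only [Fin.coe_divNat, Fin.coe_cast, Nat.div_div_eq_div_mul]; rw [mul_comm a b]
  have ej : ((Fin.cast (mul_assoc n a b) j).divNat : Fin n) = j.divNat.divNat := by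
    apply Fin.ext
    simp only [Fin.coe_divNat, Fin.coe_cast, Nat.div_div_eq_div_mul]; rw [mul_comm a b]
  rw [ei, ej]
  have hiff : ((i : ℕ) % (a * b) = (j : ℕ) % (a * b)) ↔
      ((i.divNat : ℕ) % a = (j.divNat : ℕ) % a ∧ (i : ℕ) % b = (j : ℕ) % b) := by
    rw [Fin.coe_divNat, Fin.coe_divNat]; exact mod_mul_iff
  by_cases h1 : (i.divNat : ℕ) % a = (j.divNat : ℕ) % a <;>
    by_cases h2 : (i : ℕ) % b = (j : ℕ) % b <;>
      simp [h1, h2, hiff, mul_assoc, mul_ite] <;> simp_all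

theorem mcast_mul_left {a a' b c : ℕ} (h : a = a')
    (M : Matrix (Fin a) (Fin b) ℝ) (N : Matrix (Fin b) (Fin c) ℝ) :
    mcast h rfl (M * N) = mcast h rfl M * N := by subst h; rfl

theorem sig_mcast {a b a' b' : ℕ} (h1 : a = a') (h2 : b = b') (M : Matrix (Fin a) (Fin b) ℝ) :
    (⟨a', b', mcast h1 h2 M⟩ : Σ a b : ℕ, Matrix (Fin a) (Fin b) ℝ) = ⟨a, b, M⟩ := by
  subst h1; subst h2; rfl

theorem left_collapse {m n p q u v : ℕ} (a b c d : ℕ)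
    (A : Matrix (Fin m) (Fin n) ℝ) (B : Matrix (Fin p) (Fin q) ℝ) (C : Matrix (Fin u) (Fin v) ℝ)
    (h1 : p * b = n * a) (h2 : u * d = (q * b) * c)
    (e1 : p * (b * c) = n * (a * c)) (e2 : u * d = q * (b * c)) :
    mkron (mkron A a * mcast h1 rfl (mkron B b)) c * mcast h2 rfl (mkron C d)
      = mcast (mul_assoc m a c).symm rfl
          (mkron A (a * c) * mcast e1 rfl (mkron B (b * c)) * mcast e2 rfl (mkron C d)) := by
  rw [mkron_mul, mkron_mcast, mkron_mkron, mkron_mkron, mcast_mcast,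
    mcast_mul_mcast, mcast_mul_mcast]

theorem right_collapse {m n p q u v : ℕ} (a b c d : ℕ)
    (A : Matrix (Fin m) (Fin n) ℝ) (B : Matrix (Fin p) (Fin q) ℝ) (C : Matrix (Fin u) (Fin v) ℝ)
    (hX : (p * b) * c = n * a) (h1 : u * d = q * b)
    (f1 : p * (b * c) = n * a) (f2 : u * (d * c) = q * (b * c)) :
    mkron A a * mcast hX rfl (mkron (mkron B b * mcast h1 rfl (mkron C d)) c)
      = mcast rfl (mul_assoc v d c).symm
          (mkron A a * (mcast f1 rfl (mkron B (b * c)) * mcast f2 rfl (mkron C (d * c)))) := by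
  rw [mkron_mul, mkron_mcast, mkron_mkron, mkron_mkron, mcast_mcast,
    mcast_mul_mcast, mcast_mcast, mul_mcast]
  rfl

theorem core_eq {m n p q u v : ℕ} {s1 s2 s3 s1' s2' s3' : ℕ}
    (h1 : s1 = s1') (h2 : s2 = s2') (h3 : s3 = s3')
    (A : Matrix (Fin m) (Fin n) ℝ) (B : Matrix (Fin p) (Fin q) ℝ) (C : Matrix (Fin u) (Fin v) ℝ)
    (e1 : p * s2 = n * s1) (e2 : u * s3 = q * s2)
    (f1 : p * s2' = n * s1') (f2 : u * s3' = q * s2') :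
    (⟨_, _, mkron A s1 * mcast e1 rfl (mkron B s2) * mcast e2 rfl (mkron C s3)⟩ :
        Σ a b : ℕ, Matrix (Fin a) (Fin b) ℝ)
      = ⟨_, _, mkron A s1' * (mcast f1 rfl (mkron B s2') * mcast f2 rfl (mkron C s3'))⟩ := by
  subst h1; subst h2; subst h3
  have : mkron A s1 * mcast e1 rfl (mkron B s2) * mcast e2 rfl (mkron C s3)
      = mkron A s1 * (mcast f1 rfl (mkron B s2) * mcast f2 rfl (mkron C s3)) := by
    rw [Matrix.mul_assoc]
  rw [this]

theorem main_generic {m n p q u v : ℕ} (a1 b1 a2 b2 a3 b3 a4 b4 : ℕ)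
    (A : Matrix (Fin m) (Fin n) ℝ) (B : Matrix (Fin p) (Fin q) ℝ) (C : Matrix (Fin u) (Fin v) ℝ)
    (hBA : p * b1 = n * a1) (hCX : u * b2 = (q * b1) * a2)
    (hCB : u * b3 = q * a3) (hXA : (p * a3) * b4 = n * a4)
    (H1 : a1 * a2 = a4) (H2 : b1 * a2 = a3 * b4) (H3 : b2 = b3 * b4) :
    (⟨_, _, mkron (mkron A a1 * mcast hBA rfl (mkron B b1)) a2 * mcast hCX rfl (mkron C b2)⟩ :
        Σ a b : ℕ, Matrix (Fin a) (Fin b) ℝ)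
      = ⟨_, _, mkron A a4 * mcast hXA rfl (mkron (mkron B a3 * mcast hCB rfl (mkron C b3)) b4)⟩ := by
  have e1 : p * (b1 * a2) = n * (a1 * a2) := by rw [← mul_assoc, ← mul_assoc, hBA]
  have e2 : u * b2 = q * (b1 * a2) := by rw [hCX, mul_assoc]
  have f1 : p * (a3 * b4) = n * a4 := by rw [← mul_assoc, hXA]
  have f2 : u * (b3 * b4) = q * (a3 * b4) := by rw [← mul_assoc, ← mul_assoc, hCB]
  rw [left_collapse a1 b1 a2 b2 A B C hBA hCX e1 e2,
    right_collapse a4 a3 b4 b3 A B C hXA hCB f1 f2,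
    sig_mcast, sig_mcast]
  exact core_eq H1 H2 H3 A B C e1 e2 f1 f2

/-- associativity of the semi-tensor product. -/
theorem stp_assoc {m n p q u v : ℕ} (hm : 0 < m) (hn : 0 < n) (hp : 0 < p)
    (hq : 0 < q) (hu : 0 < u) (hv : 0 < v)
    (A : Matrix (Fin m) (Fin n) ℝ) (B : Matrix (Fin p) (Fin q) ℝ)
    (C : Matrix (Fin u) (Fin v) ℝ) :
    (⟨_, _, stp (stp A B) C⟩ : Σ a b : ℕ, Matrix (Fin a) (Fin b) ℝ)
      = ⟨_, _, stp A (stp B C)⟩ := by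
  set t1 := Nat.lcm n p with ht1def
  set a1 := t1 / n with ha1def
  set b1 := t1 / p with hb1def
  have hn1 : n * a1 = t1 := Nat.mul_div_cancel' (Nat.dvd_lcm_left n p)
  have hp1 : p * b1 = t1 := Nat.mul_div_cancel' (Nat.dvd_lcm_right n p)
  have ht1pos : 0 < t1 := Nat.lcm_pos hn hp
  have hb1pos : 0 < b1 := Nat.div_pos (Nat.le_of_dvd ht1pos (Nat.dvd_lcm_right n p)) hp
  set t2 := Nat.lcm (q * b1) u with ht2def
  set a2 := t2 / (q * b1) with ha2def
  set b2 := t2 / u with hb2def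
  have hqb1 : 0 < q * b1 := Nat.mul_pos hq hb1pos
  have ht2pos : 0 < t2 := Nat.lcm_pos hqb1 hu
  have hqb2 : (q * b1) * a2 = t2 := Nat.mul_div_cancel' (Nat.dvd_lcm_left _ _)
  have hu2 : u * b2 = t2 := Nat.mul_div_cancel' (Nat.dvd_lcm_right _ _)
  set t3 := Nat.lcm q u with ht3def
  set a3 := t3 / q with ha3def
  set b3 := t3 / u with hb3def
  have hq3 : q * a3 = t3 := Nat.mul_div_cancel' (Nat.dvd_lcm_left q u)
  have hu3 : u * b3 = t3 := Nat.mul_div_cancel' (Nat.dvd_lcm_right q u)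
  have ht3pos : 0 < t3 := Nat.lcm_pos hq hu
  have ha3pos : 0 < a3 := Nat.div_pos (Nat.le_of_dvd ht3pos (Nat.dvd_lcm_left q u)) hq
  set t4 := Nat.lcm n (p * a3) with ht4def
  set a4 := t4 / n with ha4def
  set b4 := t4 / (p * a3) with hb4def
  have hn4 : n * a4 = t4 := Nat.mul_div_cancel' (Nat.dvd_lcm_left _ _)
  have hpa4 : (p * a3) * b4 = t4 := Nat.mul_div_cancel' (Nat.dvd_lcm_right _ _)
  set L := Nat.lcm (Nat.lcm (n * q) (p * q)) (p * u) with hLdef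
  have hL1 : p * t2 = L := by
    calc p * t2 = Nat.lcm (p * (q * b1)) (p * u) := (Nat.lcm_mul_left _ _ _).symm
      _ = Nat.lcm (q * (p * b1)) (p * u) := by rw [show p * (q * b1) = q * (p * b1) by ring]
      _ = Nat.lcm (q * t1) (p * u) := by rw [hp1]
      _ = Nat.lcm (Nat.lcm (q * n) (q * p)) (p * u) := by rw [ht1def, Nat.lcm_mul_left]
      _ = L := by rw [mul_comm q n, mul_comm q p]
  have hL2 : q * t4 = L := by
    calc q * t4 = Nat.lcm (q * n) (q * (p * a3)) := (Nat.lcm_mul_left _ _ _).symm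
      _ = Nat.lcm (n * q) (p * (q * a3)) := by
            rw [mul_comm q n, show q * (p * a3) = p * (q * a3) by ring]
      _ = Nat.lcm (n * q) (p * t3) := by rw [hq3]
      _ = Nat.lcm (n * q) (Nat.lcm (p * q) (p * u)) := by rw [ht3def, Nat.lcm_mul_left]
      _ = L := (Nat.lcm_assoc _ _ _).symm
  have H1 : a1 * a2 = a4 := by
    have e1 : (a1 * a2) * (n * q) = L := by
      calc (a1 * a2) * (n * q) = (n * a1) * (q * a2) := by ring
        _ = (p * b1) * (q * a2) := by rw [hn1, ← hp1]
        _ = p * ((q * b1) * a2) := by ring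
        _ = p * t2 := by rw [hqb2]
        _ = L := hL1
    have e2 : a4 * (n * q) = L := by
      calc a4 * (n * q) = q * (n * a4) := by ring
        _ = q * t4 := by rw [hn4]
        _ = L := hL2
    exact Nat.eq_of_mul_eq_mul_right (Nat.mul_pos hn hq) (e1.trans e2.symm)
  have H2 : b1 * a2 = a3 * b4 := by
    have e1 : (b1 * a2) * (p * q) = L := by
      calc (b1 * a2) * (p * q) = p * ((q * b1) * a2) := by ring
        _ = p * t2 := by rw [hqb2]
        _ = L := hL1
    have e2 : (a3 * b4) * (p * q) = L := by
      calc (a3 * b4) * (p * q) = q * ((p * a3) * b4) := by ring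
        _ = q * t4 := by rw [hpa4]
        _ = L := hL2
    exact Nat.eq_of_mul_eq_mul_right (Nat.mul_pos hp hq) (e1.trans e2.symm)
  have H3 : b2 = b3 * b4 := by
    have e1 : b2 * (p * u) = L := by
      calc b2 * (p * u) = p * (u * b2) := by ring
        _ = p * t2 := by rw [hu2]
        _ = L := hL1
    have e2 : (b3 * b4) * (p * u) = L := by
      calc (b3 * b4) * (p * u) = (u * b3) * (p * b4) := by ring
        _ = t3 * (p * b4) := by rw [hu3]
        _ = q * ((p * a3) * b4) := by rw [← hq3]; ring
        _ = q * t4 := by rw [hpa4]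
        _ = L := hL2
    exact Nat.eq_of_mul_eq_mul_right (Nat.mul_pos hp hu) (e1.trans e2.symm)
  have hBA : p * b1 = n * a1 := hp1.trans hn1.symm
  have hCX : u * b2 = (q * b1) * a2 := hu2.trans hqb2.symm
  have hCB : u * b3 = q * a3 := hu3.trans hq3.symm
  have hXA : (p * a3) * b4 = n * a4 := hpa4.trans hn4.symm
  exact main_generic a1 b1 a2 b2 a3 b3 a4 b4 A B C hBA hCX hCB hXA H1 H2 H3
end
end

section
/- The dimension-free distance d(x,y) := ‖x ⊟ y‖_V on the set of all finite-dimensional real vectors satisfies the triangle inequality: d(x,z) ≤ d(x,y) + d(y,z) for all vectors x, y, z of arbitrary dimensions. -/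
open Matrix Kronecker

noncomputable section

-- AUX
def liftTo {k : ℕ} (v : Fin k → ℝ) (s L : ℕ) (h : k * s = L) : Fin L → ℝ :=
  fun i => v (Fin.divNat (Fin.cast h.symm i))

lemma liftTo_liftTo {k M L s1 s2 s3 : ℕ} (v : Fin k → ℝ) (h1 : k * s1 = M) (h2 : M * s2 = L)
    (hs : s1 * s2 = s3) (h3 : k * s3 = L) :
    liftTo (liftTo v s1 M h1) s2 L h2 = liftTo v s3 L h3 := by
  funext i; unfold liftTo; congr 1; apply Fin.ext
  simp only [Fin.coe_divNat, Fin.coe_cast]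
  rw [Nat.div_div_eq_div_mul, Nat.mul_comm s2 s1, hs]

lemma vsub2_eq {a b : ℕ} (x : Fin a → ℝ) (z : Fin b → ℝ) (i : Fin (Nat.lcm a b)) :
    vsub2 x z i =
      liftTo x (Nat.lcm a b / a) (Nat.lcm a b) (Nat.mul_div_cancel' (Nat.dvd_lcm_left a b)) i -
      liftTo z (Nat.lcm a b / b) (Nat.lcm a b) (Nat.mul_div_cancel' (Nat.dvd_lcm_right a b)) i := by
  unfold vsub2 vkron liftTo
  rw [finProdFinEquiv_symm_apply, finProdFinEquiv_symm_apply]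

lemma vnorm_liftTo {k s L : ℕ} (hs : 0 < s) (v : Fin k → ℝ) (h : k * s = L) :
    vnorm (liftTo v s L h) = vnorm v := by
  unfold vnorm
  congr 1
  have key : ∀ p : Fin k × Fin s, liftTo v s L h (Fin.cast h (finProdFinEquiv p)) = v p.1 := by
    intro p
    unfold liftTo
    congr 1
    have h2 := finProdFinEquiv_symm_apply (m := k) (n := s) (finProdFinEquiv p)
    rw [Equiv.symm_apply_apply] at h2
    have h3 : p.1 = (finProdFinEquiv p).divNat := congrArg Prod.fst h2
    rw [h3]
    apply Fin.ext
    simp [Fin.coe_divNat]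
  have h1 : ∑ i : Fin L, liftTo v s L h i ^ 2 = s * ∑ j, v j ^ 2 := by
    rw [← (finCongr h).sum_comp (fun i : Fin L => liftTo v s L h i ^ 2)]
    rw [← finProdFinEquiv.sum_comp
      (fun i : Fin (k*s) => liftTo v s L h (finCongr h i) ^ 2)]
    simp only [finCongr_apply]
    simp only [key]
    rw [Fintype.sum_prod_type]
    simp [Finset.sum_const, nsmul_eq_mul, Finset.mul_sum]
  rw [h1, ← h]
  push_cast
  rcases Nat.eq_zero_or_pos k with hk | hk
  · subst hk; simp
  · rw [mul_comm (k:ℝ) s, mul_div_mul_left _ _ (by positivity : (s:ℝ) ≠ 0)]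

lemma vnorm_add_le {k : ℕ} (u v : Fin k → ℝ) :
    vnorm (fun i => u i + v i) ≤ vnorm u + vnorm v := by
  have norm_eq : ∀ w : Fin k → ℝ,
      vnorm w = ‖(WithLp.equiv 2 (Fin k → ℝ)).symm w‖ / Real.sqrt k := by
    intro w
    rw [EuclideanSpace.norm_eq]
    unfold vnorm
    rw [Real.sqrt_div (by positivity)]
    congr 2
    apply Finset.sum_congr rfl
    intro i _
    simp [Real.norm_eq_abs, sq_abs]
  rw [norm_eq, norm_eq, norm_eq, ← add_div]
  rcases eq_or_lt_of_le (Real.sqrt_nonneg (k:ℝ)) with h0 | h0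
  · simp [← h0]
  · exact (div_le_div_iff_of_pos_right h0).mpr (norm_add_le _ _)

lemma natDivMulDivCancel {a t L : ℕ} (ha : 0 < a) (ht : 0 < t) (hat : a ∣ t) (htL : t ∣ L) :
    t / a * (L / t) = L / a := by
  obtain ⟨u, hu⟩ := hat
  obtain ⟨w, hw⟩ := htL
  subst hw; subst hu
  rw [Nat.mul_div_cancel_left _ ha, Nat.mul_div_cancel_left _ ht, mul_assoc,
    Nat.mul_div_cancel_left _ ha]

lemma vdist_eq_lift {a b L : ℕ} (ha : 0 < a) (hb : 0 < b) (hL : 0 < L)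
    (haL : a ∣ L) (hbL : b ∣ L) (x : Fin a → ℝ) (z : Fin b → ℝ) :
    vdist x z = vnorm (fun i : Fin L =>
      liftTo x (L / a) L (Nat.mul_div_cancel' haL) i -
      liftTo z (L / b) L (Nat.mul_div_cancel' hbL) i) := by
  have htL : Nat.lcm a b ∣ L := Nat.lcm_dvd haL hbL
  have ht : 0 < Nat.lcm a b := Nat.lcm_pos ha hb
  have hs : 0 < L / Nat.lcm a b := Nat.div_pos (Nat.le_of_dvd hL htL) ht
  have hmain : liftTo (vsub2 x z) (L / Nat.lcm a b) L (Nat.mul_div_cancel' htL) =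
      fun i : Fin L =>
        liftTo x (L / a) L (Nat.mul_div_cancel' haL) i -
        liftTo z (L / b) L (Nat.mul_div_cancel' hbL) i := by
    have step : liftTo (vsub2 x z) (L / Nat.lcm a b) L (Nat.mul_div_cancel' htL) =
        fun i : Fin L =>
          liftTo (liftTo x (Nat.lcm a b / a) (Nat.lcm a b)
              (Nat.mul_div_cancel' (Nat.dvd_lcm_left a b)))
            (L / Nat.lcm a b) L (Nat.mul_div_cancel' htL) i -
          liftTo (liftTo z (Nat.lcm a b / b) (Nat.lcm a b)
              (Nat.mul_div_cancel' (Nat.dvd_lcm_right a b)))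
            (L / Nat.lcm a b) L (Nat.mul_div_cancel' htL) i := by
      funext i
      exact vsub2_eq x z _
    rw [step,
      liftTo_liftTo x _ _ (natDivMulDivCancel ha ht (Nat.dvd_lcm_left a b) htL)
        (Nat.mul_div_cancel' haL),
      liftTo_liftTo z _ _ (natDivMulDivCancel hb ht (Nat.dvd_lcm_right a b) htL)
        (Nat.mul_div_cancel' hbL)]
  unfold vdist
  rw [← vnorm_liftTo hs (vsub2 x z) (Nat.mul_div_cancel' htL), hmain]

/-- the dimension-free distance satisfies the triangle inequality. -/
theorem vdist_triangle {m n p : ℕ} (hm : 0 < m) (hn : 0 < n) (hp : 0 < p)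
    (x : Fin m → ℝ) (y : Fin n → ℝ) (z : Fin p → ℝ) :
    vdist x z ≤ vdist x y + vdist y z := by
  set L := Nat.lcm (Nat.lcm m n) (Nat.lcm n p) with hLdef
  have hmL : m ∣ L := (Nat.dvd_lcm_left m n).trans (Nat.dvd_lcm_left _ _)
  have hnL : n ∣ L := (Nat.dvd_lcm_right m n).trans (Nat.dvd_lcm_left _ _)
  have hpL : p ∣ L := (Nat.dvd_lcm_right n p).trans (Nat.dvd_lcm_right _ _)
  have hL : 0 < L := Nat.lcm_pos (Nat.lcm_pos hm hn) (Nat.lcm_pos hn hp)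
  rw [vdist_eq_lift hm hp hL hmL hpL x z, vdist_eq_lift hm hn hL hmL hnL x y,
    vdist_eq_lift hn hp hL hnL hpL y z]
  have hfun : (fun i : Fin L =>
      liftTo x (L / m) L (Nat.mul_div_cancel' hmL) i -
      liftTo z (L / p) L (Nat.mul_div_cancel' hpL) i) = fun i : Fin L =>
        (liftTo x (L / m) L (Nat.mul_div_cancel' hmL) i -
          liftTo y (L / n) L (Nat.mul_div_cancel' hnL) i) +
        (liftTo y (L / n) L (Nat.mul_div_cancel' hnL) i -
          liftTo z (L / p) L (Nat.mul_div_cancel' hpL) i) := by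
    funext i; ring
  rw [hfun]
  exact vnorm_add_le _ _
end
end

section
/- Let A ∈ M_{k×kμ_x} be dimension-bounded (i.e., its number of rows divides its number of columns). Then A has infinitely many invariant spaces R^r; in particular, if R^r is A-invariant and s ∈ N with gcd(s, kμ_x) = 1, then R^{sr} is also A-invariant. -/
open Matrix Kronecker

noncomputable section

lemma sigma_cast {d r : ℕ} (h : d = r) (v : Fin d → ℝ) :
    (⟨d, v⟩ : Σ k : ℕ, Fin k → ℝ) = ⟨r, fun i => v (Fin.cast h.symm i)⟩ := by
  subst h; rfl

lemma ainv_iff {k μ : ℕ} (hk : 0 < k) (hμ : 0 < μ) (A : Matrix (Fin k) (Fin (k * μ)) ℝ)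
    {r : ℕ} (hr : 0 < r) : AInvariant A r ↔ Nat.gcd (k * μ) r = k := by
  have hn : 0 < k * μ := Nat.mul_pos hk hμ
  have hgr : Nat.gcd (k * μ) r ∣ r := Nat.gcd_dvd_right _ _
  have hlcm : Nat.lcm (k * μ) r / (k * μ) = r / Nat.gcd (k * μ) r := by
    rw [Nat.lcm, Nat.mul_div_assoc _ hgr, Nat.mul_div_cancel_left _ hn]
  have hdim : AInvariant A r ↔ k * (Nat.lcm (k * μ) r / (k * μ)) = r := by
    constructor
    · intro h
      obtain ⟨y, hy⟩ := h (fun _ => 0)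
      exact congrArg Sigma.fst hy
    · intro h x
      exact ⟨fun i => vprod A x (Fin.cast h.symm i), sigma_cast h _⟩
  rw [hdim, hlcm]
  constructor
  · intro h
    have h2 : Nat.gcd (k * μ) r * (r / Nat.gcd (k * μ) r) = r := Nat.mul_div_cancel' hgr
    have hq : 0 < r / Nat.gcd (k * μ) r :=
      Nat.div_pos (Nat.le_of_dvd hr hgr) (Nat.gcd_pos_of_pos_right _ hr)
    exact (Nat.eq_of_mul_eq_mul_right hq (h.trans h2.symm)).symm
  · intro h
    rw [h]
    exact Nat.mul_div_cancel' (h ▸ hgr)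

/-- a dimension-bounded `A ∈ M_{k×kμ}` has infinitely many invariant
spaces `R^r`; in particular `R^r` invariant and `gcd(s, kμ) = 1` give `R^{sr}`
invariant. -/
theorem ainvariant_infinite {k μ : ℕ} (hk : 0 < k) (hμ : 0 < μ)
    (A : Matrix (Fin k) (Fin (k * μ)) ℝ) :
    {r : ℕ | 0 < r ∧ AInvariant A r}.Infinite ∧
    ∀ r s : ℕ, 0 < r → 0 < s → Nat.gcd s (k * μ) = 1 →
      AInvariant A r → AInvariant A (s * r) := by
  constructor
  · apply Set.infinite_of_injective_forall_mem
      (f := fun t : ℕ => k * (1 + μ * t))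
    · intro a b hab
      simp only at hab
      have := Nat.eq_of_mul_eq_mul_left hk hab
      have := Nat.add_left_cancel this
      exact Nat.eq_of_mul_eq_mul_left hμ this
    · intro t
      have hrpos : 0 < k * (1 + μ * t) := Nat.mul_pos hk (Nat.lt_of_lt_of_le Nat.one_pos (Nat.le_add_right 1 _))
      refine ⟨hrpos, (ainv_iff hk hμ A hrpos).mpr ?_⟩
      rw [Nat.gcd_mul_left, Nat.gcd_add_mul_left_right μ 1 t, Nat.gcd_one_right, Nat.mul_one]
  · intro r s hr hs hcop hinv
    rw [ainv_iff hk hμ A (Nat.mul_pos hs hr)]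
    rw [Nat.Coprime.gcd_mul_left_cancel_right r hcop]
    exact (ainv_iff hk hμ A hr).mp hinv
end
end

section
/- If A ∼ B (matrix equivalence, i.e., A⊗I_α = B⊗I_β for some α, β) with A ∈ M_{m×n} and B ∈ M_{p×q}, then n/m = q/p and the dimension-normalized norms agree: sqrt(n/m)·‖A‖ = sqrt(q/p)·‖B‖, where ‖·‖ is the spectral norm. Consequently ‖·‖_V is well-defined on matrix equivalence classes. -/
open Matrix Kronecker

noncomputable section

section Aux

lemma specNorm_eq_sSup {m n : ℕ} (A : Matrix (Fin m) (Fin n) ℝ) :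
    specNorm A = Real.sqrt (sSup (spectrum ℝ (Aᴴ * A))) := by
  unfold specNorm
  rw [Matrix.IsHermitian.spectrum_real_eq_range_eigenvalues (Matrix.isHermitian_conjTranspose_mul_self A), sSup_range]

lemma mkron_smul {m n : ℕ} (r : ℝ) (X : Matrix (Fin m) (Fin n) ℝ) (s : ℕ) :
    mkron (r • X) s = r • mkron X s := by
  ext i j
  simp [mkron, Matrix.smul_apply, mul_assoc]

lemma mkron_sub {m n : ℕ} (X Y : Matrix (Fin m) (Fin n) ℝ) (s : ℕ) :
    mkron (X - Y) s = mkron X s - mkron Y s := by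
  ext i j
  simp [mkron, Matrix.sub_apply, sub_mul]

lemma mkron_one {n : ℕ} (s : ℕ) :
    mkron (1 : Matrix (Fin n) (Fin n) ℝ) s = 1 := by
  unfold mkron
  rw [show Matrix.kroneckerMap (· * ·) (1 : Matrix (Fin n) (Fin n) ℝ)
      (1 : Matrix (Fin s) (Fin s) ℝ) = 1 from Matrix.one_kronecker_one]
  simp [Matrix.reindex_apply, Matrix.submatrix_one_equiv]

lemma mkron_det {n : ℕ} (X : Matrix (Fin n) (Fin n) ℝ) (s : ℕ) :
    (mkron X s).det = X.det ^ s := by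
  unfold mkron
  rw [Matrix.det_reindex_self, Matrix.det_kronecker]
  simp

lemma spectrum_mkron {n : ℕ} (X : Matrix (Fin n) (Fin n) ℝ) {s : ℕ} (hs : s ≠ 0) :
    spectrum ℝ (mkron X s) = spectrum ℝ X := by
  ext r
  rw [spectrum.mem_iff, spectrum.mem_iff, not_iff_not]
  have key : algebraMap ℝ _ r - mkron X s = mkron (algebraMap ℝ _ r - X) s := by
    rw [Algebra.algebraMap_eq_smul_one, Algebra.algebraMap_eq_smul_one,
      mkron_sub, mkron_smul, mkron_one]
  rw [key, Matrix.isUnit_iff_isUnit_det, Matrix.isUnit_iff_isUnit_det, mkron_det,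
    isUnit_pow_iff hs]

lemma mkron_transpose {m n : ℕ} (A : Matrix (Fin m) (Fin n) ℝ) (s : ℕ) :
    (mkron A s)ᵀ = mkron Aᵀ s := by
  ext i j
  simp only [mkron, Matrix.transpose_apply, Matrix.reindex_apply, Matrix.submatrix_apply,
    Matrix.kroneckerMap_apply]
  rw [Matrix.one_apply, Matrix.one_apply]
  simp [eq_comm]

lemma mkron_mul_s19 {m n p : ℕ} (X : Matrix (Fin m) (Fin n) ℝ) (Y : Matrix (Fin n) (Fin p) ℝ)
    (s : ℕ) : mkron (X * Y) s = mkron X s * mkron Y s := by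
  unfold mkron
  simp only [Matrix.reindex_apply]
  rw [Matrix.submatrix_mul_equiv]
  congr 1
  rw [← Matrix.mul_kronecker_mul, Matrix.one_mul]

lemma specNorm_mkron {m n : ℕ} (A : Matrix (Fin m) (Fin n) ℝ) {s : ℕ} (hs : s ≠ 0) :
    specNorm (mkron A s) = specNorm A := by
  rw [specNorm_eq_sSup, specNorm_eq_sSup]
  have hct : ∀ (a b : ℕ) (M : Matrix (Fin a) (Fin b) ℝ), Mᴴ = Mᵀ := fun _ _ _ => rfl
  have h : (mkron A s)ᴴ * mkron A s = mkron (Aᴴ * A) s := by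
    rw [hct, hct, mkron_transpose, ← mkron_mul_s19]
  rw [h, spectrum_mkron _ hs]

lemma spectrum_submatrix {k l : ℕ} (X : Matrix (Fin k) (Fin k) ℝ) (e : Fin l ≃ Fin k) :
    spectrum ℝ (X.submatrix e e) = spectrum ℝ X := by
  have h : X.submatrix e e = Matrix.reindexAlgEquiv ℝ ℝ e.symm X := by
    rw [Matrix.reindexAlgEquiv_apply, Matrix.reindex_apply]
    simp
  rw [h, AlgEquiv.spectrum_eq]

lemma specNorm_submatrix {a b P Q : ℕ} (M : Matrix (Fin P) (Fin Q) ℝ)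
    (e : Fin a ≃ Fin P) (f : Fin b ≃ Fin Q) :
    specNorm (M.submatrix e f) = specNorm M := by
  rw [specNorm_eq_sSup, specNorm_eq_sSup]
  have hct : ∀ (a b : ℕ) (N : Matrix (Fin a) (Fin b) ℝ), Nᴴ = Nᵀ := fun _ _ _ => rfl
  have h : (M.submatrix e f)ᴴ * (M.submatrix e f) = (Mᴴ * M).submatrix f f := by
    rw [hct, hct, Matrix.transpose_submatrix, Matrix.submatrix_mul_equiv]
  rw [h, spectrum_submatrix]

end Aux

/-- matrix equivalence preserves the dimension ratio and the
dimension-normalized spectral norm, so `‖·‖_V` is well defined on equivalence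
classes. -/
theorem mequiv_norm {m n p q : ℕ} (hm : 0 < m) (hn : 0 < n) (hp : 0 < p) (hq : 0 < q)
    (A : Matrix (Fin m) (Fin n) ℝ) (B : Matrix (Fin p) (Fin q) ℝ)
    (h : MEquiv A B) :
    (n : ℚ) / m = (q : ℚ) / p ∧
    Real.sqrt ((n : ℝ) / m) * specNorm A = Real.sqrt ((q : ℝ) / p) * specNorm B := by
  obtain ⟨α, β, hα, hβ, h1, h2, hAB⟩ := h
  have hnp : n * p = q * m := by
    have hh : n * p * α = q * m * α := by
      calc n * p * α = p * (n * α) := by ring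
        _ = p * (q * β) := by rw [h2]
        _ = q * (p * β) := by ring
        _ = q * (m * α) := by rw [h1]
        _ = q * m * α := by ring
    exact Nat.eq_of_mul_eq_mul_right hα hh
  constructor
  · rw [div_eq_div_iff (Nat.cast_ne_zero.mpr hm.ne') (Nat.cast_ne_zero.mpr hp.ne')]
    exact_mod_cast hnp
  · have hratio : (n : ℝ) / m = (q : ℝ) / p := by
      rw [div_eq_div_iff (Nat.cast_ne_zero.mpr hm.ne') (Nat.cast_ne_zero.mpr hp.ne')]
      exact_mod_cast hnp
    have hkey : mkron A α = (mkron B β).submatrix (finCongr h1) (finCongr h2) := by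
      ext i j
      exact hAB i j
    have hspec : specNorm A = specNorm B := by
      rw [← specNorm_mkron A hα.ne', hkey, specNorm_submatrix, specNorm_mkron B hβ.ne']
    rw [hratio, hspec]
end
end
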